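/- Define j : (0, 1) → ℝ by j(ξ) = ln((ξ+1)/(3(1−ξ))) + 2ξ/(ξ²−1) − ξ·ln²((ξ+1)/(3(1−ξ))). Then j'(ξ) = −( ln((ξ+1)/(3(1−ξ))) − 2ξ/(ξ²−1) )² ≤ 0 for all ξ ∈ (0,1), j extends continuously to ξ = 0 with j(0) = ln(1/3) < 0, and consequently j(ξ) < 0 for all ξ ∈ (0, 1). -/

import Mathlib

open Set Real Filter

noncomputable def Faux (ξ : ℝ) : ℝ :=
  Real.log ((ξ + 1) / (3 * (1 - ξ))) + 2 * ξ / (ξ ^ 2 - 1)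
    - ξ * (Real.log ((ξ + 1) / (3 * (1 - ξ)))) ^ 2

lemma Faux_deriv {ξ : ℝ} (hξ : ξ ∈ Set.Ioo (-1 : ℝ) 1) :
    HasDerivAt Faux (-(Real.log ((ξ + 1) / (3 * (1 - ξ))) - 2 * ξ / (ξ ^ 2 - 1)) ^ 2) ξ := by
  obtain ⟨h1', h2'⟩ := hξ
  have h1 : (0:ℝ) < ξ + 1 := by linarith
  have h2 : (0:ℝ) < 1 - ξ := by linarith
  have h3 : ξ ^ 2 - 1 ≠ 0 := by nlinarith
  have h4 : (3 * (1 - ξ)) ≠ 0 := by positivity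
  have hv : HasDerivAt (fun x : ℝ => 3 * (1 - x)) (-3) ξ := by
    simpa using (((hasDerivAt_id ξ).const_sub 1).const_mul 3)
  have hu : HasDerivAt (fun x : ℝ => (x + 1) / (3 * (1 - x))) (2 / (3 * (1 - ξ) ^ 2)) ξ := by
    have := ((hasDerivAt_id ξ).add_const 1).div hv h4
    refine this.congr_deriv ?_
    simp only [id]
    field_simp
    ring
  have hupos : 0 < (ξ + 1) / (3 * (1 - ξ)) := by positivity
  have hL : HasDerivAt (fun x : ℝ => Real.log ((x + 1) / (3 * (1 - x)))) (-2 / (ξ ^ 2 - 1)) ξ := by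
    have h5 : (1 - ξ) ≠ 0 := h2.ne'
    have h6 : (ξ + 1) ≠ 0 := h1.ne'
    have := hu.log (ne_of_gt hupos)
    convert this using 1
    field_simp
    ring
  have hh : HasDerivAt (fun x : ℝ => 2 * x / (x ^ 2 - 1))
      ((2 * (ξ ^ 2 - 1) - 2 * ξ * (2 * ξ)) / (ξ ^ 2 - 1) ^ 2) ξ := by
    have hnum : HasDerivAt (fun x : ℝ => 2 * x) 2 ξ := by
      simpa using (hasDerivAt_id ξ).const_mul 2
    have hden : HasDerivAt (fun x : ℝ => x ^ 2 - 1) (2 * ξ) ξ := by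
      simpa using ((hasDerivAt_pow 2 ξ).sub_const 1)
    exact hnum.div hden h3
  have hlast : HasDerivAt (fun x : ℝ => x * (Real.log ((x + 1) / (3 * (1 - x)))) ^ 2)
      (1 * (Real.log ((ξ + 1) / (3 * (1 - ξ)))) ^ 2 +
        ξ * (2 * Real.log ((ξ + 1) / (3 * (1 - ξ))) ^ 1 * (-2 / (ξ ^ 2 - 1)))) ξ := by
    exact (hasDerivAt_id ξ).mul (hL.pow 2)
  have := (hL.add hh).sub hlast
  refine this.congr_deriv ?_
  field_simp
  ring

lemma Faux_anti : AntitoneOn Faux (Set.Ico (0:ℝ) 1) := by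
  have hsub : Set.Ico (0:ℝ) 1 ⊆ Set.Ioo (-1:ℝ) 1 := fun x hx => ⟨by linarith [hx.1], hx.2⟩
  apply antitoneOn_of_deriv_nonpos (convex_Ico 0 1)
  · exact fun x hx => (Faux_deriv (hsub hx)).continuousAt.continuousWithinAt
  · intro x hx
    rw [interior_Ico] at hx
    exact (Faux_deriv (hsub (Set.Ioo_subset_Ico_self hx))).differentiableAt.differentiableWithinAt
  · intro x hx
    rw [interior_Ico] at hx
    rw [(Faux_deriv (hsub (Set.Ioo_subset_Ico_self hx))).deriv]
    exact neg_nonpos.mpr (sq_nonneg _)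

lemma Faux_zero : Faux 0 = Real.log (1 / 3) := by
  simp [Faux]

theorem stmt_19 (j : ℝ → ℝ)
    (hj : ∀ ξ ∈ Set.Ioo (0 : ℝ) 1,
      j ξ = Real.log ((ξ + 1) / (3 * (1 - ξ))) + 2 * ξ / (ξ ^ 2 - 1)
        - ξ * (Real.log ((ξ + 1) / (3 * (1 - ξ)))) ^ 2) :
    (∀ ξ ∈ Set.Ioo (0 : ℝ) 1,
      HasDerivAt j (-(Real.log ((ξ + 1) / (3 * (1 - ξ))) - 2 * ξ / (ξ ^ 2 - 1)) ^ 2) ξ) ∧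
    Tendsto j (nhdsWithin 0 (Set.Ioi 0)) (nhds (Real.log (1 / 3))) ∧
    Real.log (1 / 3) < 0 ∧
    ∀ ξ ∈ Set.Ioo (0 : ℝ) 1, j ξ < 0 := by
  have hjF : ∀ ξ ∈ Set.Ioo (0:ℝ) 1, j ξ = Faux ξ := fun ξ hξ => hj ξ hξ
  refine ⟨?_, ?_, ?_, ?_⟩
  · intro ξ hξ
    have hd := Faux_deriv (show ξ ∈ Set.Ioo (-1:ℝ) 1 from ⟨by linarith [hξ.1], hξ.2⟩)
    apply hd.congr_of_eventuallyEq
    filter_upwards [Ioo_mem_nhds hξ.1 hξ.2] with x hx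
    exact hjF x hx
  · have hcont : Tendsto Faux (nhdsWithin 0 (Set.Ioi 0)) (nhds (Real.log (1 / 3))) := by
      rw [← Faux_zero]
      exact ((Faux_deriv (show (0:ℝ) ∈ Set.Ioo (-1:ℝ) 1 by norm_num)).continuousAt.continuousWithinAt).tendsto
    apply hcont.congr'
    filter_upwards [Ioo_mem_nhdsGT_of_mem (show (0:ℝ) ∈ Set.Ico (0:ℝ) 1 by norm_num)] with x hx
    exact (hjF x hx).symm
  · exact Real.log_neg (by norm_num) (by norm_num)
  · intro ξ hξ
    rw [hjF ξ hξ]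
    have h1 : Faux ξ ≤ Faux 0 :=
      Faux_anti (by norm_num) ⟨le_of_lt hξ.1, hξ.2⟩ (le_of_lt hξ.1)
    have h2 : Faux 0 < 0 := by
      rw [Faux_zero]; exact Real.log_neg (by norm_num) (by norm_num)
    linarith
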